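/- Let G be an index coding instance on n ≥ 1 messages, q a positive integer, t = (t_1,…,t_n) a tuple of positive integers, j ∈ [n], and l ∈ [t_j]. Then the component confusion graph Γ_t^{(jl)}(G) has no chordless cycle of length greater than four: for every k ≥ 5 and every list of k pairwise distinct vertices v_1,…,v_k of Γ_t^{(jl)}(G) such that v_1 ∼ v_2, v_2 ∼ v_3, …, v_{k−1} ∼ v_k, and v_k ∼ v_1, there exist indices a, b ∈ [k] that are not cyclically consecutive (b ≢ a±1 mod k and a ≠ b) with v_a adjacent to v_b in Γ_t^{(jl)}(G). -/

import Mathlib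

namespace IC

/-- Two message tuples (with `x_i ∈ {0,…,q−1}^{t_i}`) are confusable at
position `l` of node `j` for the directed graph with edge relation `E`. -/
def ConfusableAt {n q : ℕ} (E : Fin n → Fin n → Prop) (t : Fin n → ℕ)
    (j : Fin n) (l : Fin (t j))
    (x z : ∀ i : Fin n, Fin (t i) → Fin q) : Prop :=
  x j l ≠ z j l ∧ ∀ i : Fin n, E i j → x i = z i

/-- The component confusion graph `Γ_t^{(jl)}(G)`. -/
def componentConfusionGraph {n : ℕ} (q : ℕ) (E : Fin n → Fin n → Prop) (t : Fin n → ℕ)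
    (j : Fin n) (l : Fin (t j)) :
    SimpleGraph (∀ i : Fin n, Fin (t i) → Fin q) where
  Adj x z := ConfusableAt E t j l x z
  symm := ⟨fun _ _ ⟨h1, h2⟩ => ⟨h1.symm, fun i hi => (h2 i hi).symm⟩⟩
  loopless := ⟨fun _ ⟨h1, _⟩ => h1 rfl⟩

/-- The confusion graph `Γ_t(G)`. -/
def confusionGraph {n : ℕ} (q : ℕ) (E : Fin n → Fin n → Prop) (t : Fin n → ℕ) :
    SimpleGraph (∀ i : Fin n, Fin (t i) → Fin q) where
  Adj x z := ∃ (j : Fin n) (l : Fin (t j)), ConfusableAt E t j l x z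
  symm := ⟨fun _ _ ⟨j, l, h1, h2⟩ => ⟨j, l, h1.symm, fun i hi => (h2 i hi).symm⟩⟩
  loopless := ⟨fun _ ⟨_, _, h1, _⟩ => h1 rfl⟩

end IC

/-- The component confusion graph `Γ_t^{(jl)}(G)` has no
chordless cycle of length greater than four: every cycle on `k + 5` pairwise
distinct vertices has a chord. -/
theorem componentConfusionGraph_no_long_chordless_cycle
    (n q : ℕ) (hn : 1 ≤ n) (hq : 1 ≤ q)
    (E : Fin n → Fin n → Prop) (hE : ∀ i, ¬ E i i)
    (t : Fin n → ℕ) (ht : ∀ j, 1 ≤ t j)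
    (j : Fin n) (l : Fin (t j)) :
    ∀ (k : ℕ) (v : Fin (k + 5) → (∀ i : Fin n, Fin (t i) → Fin q)),
      Function.Injective v →
      (∀ i : Fin (k + 5),
        (IC.componentConfusionGraph q E t j l).Adj (v i) (v (i + 1))) →
      ∃ a b : Fin (k + 5), a ≠ b ∧ b ≠ a + 1 ∧ a ≠ b + 1 ∧
        (IC.componentConfusionGraph q E t j l).Adj (v a) (v b) := by

  intro k v hinj hadj
  have hside : ∀ (a : Fin (k+5)) (i : Fin n), E i j → v a i = v 0 i := by
    rintro ⟨m, hm⟩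
    induction m with
    | zero => intro i hi; rfl
    | succ m ih =>
      intro i hi
      have hm' : m < k + 5 := Nat.lt_of_succ_lt hm
      have heq : (⟨m, hm'⟩ : Fin (k+5)) + 1 = ⟨m+1, hm⟩ := by
        apply Fin.ext
        simp [Fin.add_def, Nat.mod_eq_of_lt hm]
      have hstep := ((hadj ⟨m, hm'⟩).2 i hi)
      rw [heq] at hstep
      rw [← hstep]; exact ih hm' i hi
  have key : ∀ a b : Fin (k+5), v a j l ≠ v b j l →
      (IC.componentConfusionGraph q E t j l).Adj (v a) (v b) := by
    intro a b hne
    exact ⟨hne, fun i hi => (hside a i hi).trans (hside b i hi).symm⟩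
  have h1lt : (1:ℕ) < k + 5 := by omega
  have h3lt : (3:ℕ) < k + 5 := by omega
  by_cases h02 : v ⟨0, by omega⟩ j l = v ⟨2, by omega⟩ j l
  · refine ⟨⟨0, by omega⟩, ⟨3, by omega⟩, ?_, ?_, ?_, ?_⟩
    · intro h; exact absurd (congrArg Fin.val h) (by simp)
    · intro h
      have := congrArg Fin.val h
      simp [Fin.add_def, Nat.mod_eq_of_lt h1lt] at this
    · intro h
      have := congrArg Fin.val h
      simp [Fin.add_def, Nat.mod_eq_of_lt (show (4:ℕ) < k+5 by omega)] at this
    · apply key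
      intro h03
      have h23 := (hadj ⟨2, by omega⟩).1
      have heq : (⟨2, by omega⟩ : Fin (k+5)) + 1 = ⟨3, h3lt⟩ := by
        apply Fin.ext
        simp [Fin.add_def, Nat.mod_eq_of_lt h3lt]
      rw [heq] at h23
      exact h23 (h02.symm.trans h03)
  · refine ⟨⟨0, by omega⟩, ⟨2, by omega⟩, ?_, ?_, ?_, key _ _ h02⟩
    · intro h; exact absurd (congrArg Fin.val h) (by simp)
    · intro h
      have := congrArg Fin.val h
      simp [Fin.add_def, Nat.mod_eq_of_lt h1lt] at this
    · intro h
      have := congrArg Fin.val h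
      simp [Fin.add_def, Nat.mod_eq_of_lt h3lt] at this
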